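/- Let {w^k} be a sequence generated by the projected gradient iteration w^{k+1} ∈ P_{A_s}(w^k − λ∇f(w^k)) with w^0 ∈ A_s, let w* be an accumulation point of {w^k} such that P_{A_s}(w* − λ∇f(w*)) is a singleton, and suppose there exists γ ∈ [0,1) such that for every J ∈ I_{w*} and all w, w′ ∈ A_J, ‖(w − λ∇f(w)) − (w′ − λ∇f(w′))‖ ≤ γ‖w − w′‖. Then the objective values converge R-linearly: there exist C > 0 and ρ ∈ (0,1) such that f(w^k) − f(w*) ≤ C·ρ^k for all k. -/

import Mathlib

open Filter Topology

noncomputable section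

def spSet (n s : ℕ) : Set (EuclideanSpace ℝ (Fin n)) :=
  {w | (Finset.univ.filter fun i => w i ≠ 0).card ≤ s}

def projSet {n : ℕ} (A : Set (EuclideanSpace ℝ (Fin n))) (z : EuclideanSpace ℝ (Fin n)) :
    Set (EuclideanSpace ℝ (Fin n)) :=
  {y | y ∈ A ∧ ∀ x ∈ A, ‖z - y‖ ≤ ‖z - x‖}

def coordSub {n : ℕ} (J : Finset (Fin n)) : Set (EuclideanSpace ℝ (Fin n)) :=
  {w | ∀ i ∉ J, w i = 0}

def coordRestrict {n : ℕ} (J : Finset (Fin n)) (v : EuclideanSpace ℝ (Fin n)) :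
    EuclideanSpace ℝ (Fin n) :=
  (EuclideanSpace.equiv (Fin n) ℝ).symm (fun i => if i ∈ J then v i else 0)
namespace Aux
variable {n s : ℕ}

def suppF (v : EuclideanSpace ℝ (Fin n)) : Finset (Fin n) :=
  Finset.univ.filter (fun i => v i ≠ 0)

lemma mem_suppF {v : EuclideanSpace ℝ (Fin n)} {i : Fin n} : i ∈ suppF v ↔ v i ≠ 0 := by
  simp [suppF]

lemma mem_spSet_iff {v : EuclideanSpace ℝ (Fin n)} : v ∈ spSet n s ↔ (suppF v).card ≤ s :=
  Iff.rfl

lemma cr_apply (J : Finset (Fin n)) (v : EuclideanSpace ℝ (Fin n)) (i : Fin n) :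
    coordRestrict J v i = if i ∈ J then v i else 0 := rfl

lemma norm_sq_eq (x : EuclideanSpace ℝ (Fin n)) : ‖x‖ ^ 2 = ∑ i, (x i) ^ 2 := by
  rw [EuclideanSpace.norm_eq, Real.sq_sqrt (by positivity)]
  simp [Real.norm_eq_abs, sq_abs]

lemma suppF_subset_of_coordSub {v : EuclideanSpace ℝ (Fin n)} {J : Finset (Fin n)}
    (h : v ∈ coordSub J) : suppF v ⊆ J := fun i hi => by
  by_contra hiJ
  exact (mem_suppF.1 hi) (h i hiJ)

lemma mem_coordSub_of_suppF {v : EuclideanSpace ℝ (Fin n)} {J : Finset (Fin n)}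
    (h : suppF v ⊆ J) : v ∈ coordSub J := fun i hi => by
  by_contra hv
  exact hi (h (mem_suppF.2 hv))

lemma cr_mem_coordSub (J : Finset (Fin n)) (v : EuclideanSpace ℝ (Fin n)) :
    coordRestrict J v ∈ coordSub J := fun i hi => by simp [cr_apply, hi]

lemma cr_mem_spSet {J : Finset (Fin n)} (hJ : J.card ≤ s) (v : EuclideanSpace ℝ (Fin n)) :
    coordRestrict J v ∈ spSet n s := by
  rw [mem_spSet_iff]
  exact le_trans (Finset.card_le_card (suppF_subset_of_coordSub (cr_mem_coordSub J v))) hJ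

lemma cr_sub (J : Finset (Fin n)) (a b : EuclideanSpace ℝ (Fin n)) :
    coordRestrict J (a - b) = coordRestrict J a - coordRestrict J b := by
  ext i
  simp only [cr_apply, PiLp.sub_apply]
  split_ifs <;> simp

lemma norm_cr_le (J : Finset (Fin n)) (v : EuclideanSpace ℝ (Fin n)) :
    ‖coordRestrict J v‖ ≤ ‖v‖ := by
  have h : ‖coordRestrict J v‖ ^ 2 ≤ ‖v‖ ^ 2 := by
    rw [norm_sq_eq, norm_sq_eq]
    apply Finset.sum_le_sum
    intro i _
    rw [cr_apply]
    split_ifs with hh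
    · exact le_rfl
    · simpa using sq_nonneg (v i)
  nlinarith [norm_nonneg (coordRestrict J v), norm_nonneg v]

/-- squared distance to coordinate restriction -/
lemma dist_sq_cr (J : Finset (Fin n)) (v : EuclideanSpace ℝ (Fin n)) :
    ‖v - coordRestrict J v‖ ^ 2 = ∑ i ∈ Jᶜ, (v i) ^ 2 := by
  rw [norm_sq_eq]
  have : ∀ i, ((v - coordRestrict J v) i) ^ 2 = if i ∈ J then 0 else (v i) ^ 2 := by
    intro i
    rw [PiLp.sub_apply, cr_apply]
    split_ifs <;> simp
  simp_rw [this]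
  rw [Finset.sum_ite, Finset.sum_const_zero, zero_add]
  congr 1
  ext i
  simp

/-- lower bound on squared distance to any point of a coordinate subspace -/
lemma dist_sq_ge {J : Finset (Fin n)} {x : EuclideanSpace ℝ (Fin n)} (hx : x ∈ coordSub J)
    (v : EuclideanSpace ℝ (Fin n)) :
    ∑ i ∈ Jᶜ, (v i) ^ 2 ≤ ‖v - x‖ ^ 2 := by
  rw [norm_sq_eq]
  have h1 : ∑ i ∈ Jᶜ, (v i) ^ 2 = ∑ i ∈ Jᶜ, ((v - x) i) ^ 2 := by
    apply Finset.sum_congr rfl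
    intro i hi
    rw [PiLp.sub_apply, hx i (Finset.mem_compl.1 hi), sub_zero]
  rw [h1]
  exact Finset.sum_le_sum_of_subset_of_nonneg (Finset.subset_univ _)
    (fun i _ _ => sq_nonneg _)

/-- key characterization: a projection point with support inside a small J equals
the coordinate restriction of z to J -/
lemma proj_eq_restrict {z y : EuclideanSpace ℝ (Fin n)} {J : Finset (Fin n)}
    (hy : y ∈ projSet (spSet n s) z) (hsupp : suppF y ⊆ J) (hJ : J.card ≤ s) :
    y = coordRestrict J z := by
  obtain ⟨hyA, hopt⟩ := hy
  have hycs : y ∈ coordSub J := mem_coordSub_of_suppF hsupp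
  have h1 : ‖z - y‖ ≤ ‖z - coordRestrict J z‖ := hopt _ (cr_mem_spSet hJ z)
  have h2 : ‖z - y‖ ^ 2 ≤ ∑ i ∈ Jᶜ, (z i) ^ 2 := by
    rw [← dist_sq_cr]
    exact pow_le_pow_left₀ (norm_nonneg _) h1 2
  have h3 : ∑ i ∈ Jᶜ, (z i) ^ 2 ≤ ‖z - y‖ ^ 2 := dist_sq_ge hycs z
  -- hence the sum over J of (z i - y i)^2 is zero
  have hsplit : ‖z - y‖ ^ 2 = ∑ i ∈ Jᶜ, ((z - y) i) ^ 2 + ∑ i ∈ J, ((z - y) i) ^ 2 := by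
    rw [norm_sq_eq]
    rw [← Finset.sum_add_sum_compl J fun i => ((z - y) i) ^ 2]
    ring
  have hcompl : ∑ i ∈ Jᶜ, ((z - y) i) ^ 2 = ∑ i ∈ Jᶜ, (z i) ^ 2 := by
    apply Finset.sum_congr rfl
    intro i hi
    rw [PiLp.sub_apply, hycs i (Finset.mem_compl.1 hi), sub_zero]
  have hJ0 : ∑ i ∈ J, ((z - y) i) ^ 2 ≤ 0 := by
    have h4 := le_antisymm h2 h3
    rw [hsplit, hcompl] at h4
    linarith
  have hterm : ∀ i ∈ J, ((z - y) i) ^ 2 = 0 := by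
    intro i hi
    have hnn : ∀ i ∈ J, 0 ≤ ((z - y) i) ^ 2 := fun i _ => sq_nonneg _
    have := (Finset.sum_eq_zero_iff_of_nonneg hnn).1 (le_antisymm hJ0 (Finset.sum_nonneg hnn))
    exact this i hi
  ext i
  rw [cr_apply]
  split_ifs with hiJ
  · have := hterm i hiJ
    have h5 : (z - y) i = 0 := by
      exact pow_eq_zero_iff (by norm_num) |>.1 this
    rw [PiLp.sub_apply] at h5
    linarith
  · exact hycs i hiJ

/-- complement-sum bookkeeping for a swap -/
lemma sum_compl_swap {J : Finset (Fin n)} {i j : Fin n} (hiJ : i ∉ J) (hjJ : j ∈ J)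
    (g : Fin n → ℝ) :
    ∑ k ∈ (insert i (J.erase j))ᶜ, g k = ∑ k ∈ Jᶜ, g k + g j - g i := by
  have hij : i ≠ j := fun h => hiJ (h ▸ hjJ)
  have hiC : i ∈ Jᶜ := Finset.mem_compl.2 hiJ
  have hjC : j ∉ Jᶜ := Finset.notMem_compl.2 hjJ
  rw [Finset.compl_insert, Finset.compl_erase]
  rw [Finset.erase_insert_of_ne hij.symm]
  rw [Finset.sum_insert (by simp [hjC, hij.symm])]
  rw [← Finset.add_sum_erase _ g hiC]
  ring

/-- spSet is closed -/
lemma isClosed_coordSub (J : Finset (Fin n)) : IsClosed (coordSub (n := n) J) := by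
  have : coordSub (n := n) J = ⋂ i, {w : EuclideanSpace ℝ (Fin n) | i ∉ J → w i = 0} := by
    ext w; simp [coordSub]
  rw [this]
  apply isClosed_iInter
  intro i
  by_cases hi : i ∈ J
  · simp only [hi, not_true_eq_false, false_implies]
    exact isClosed_univ
  · simp only [hi, not_false_eq_true, true_implies]
    exact isClosed_eq (EuclideanSpace.proj i).continuous continuous_const

lemma isClosed_spSet : IsClosed (spSet n s) := by
  have : spSet n s = ⋃ J : {J : Finset (Fin n) // J.card ≤ s}, coordSub J.1 := by
    ext v
    constructor
    · intro hv
      exact Set.mem_iUnion.2 ⟨⟨suppF v, hv⟩, mem_coordSub_of_suppF (subset_refl _)⟩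
    · intro hv
      obtain ⟨⟨J, hJ⟩, hvJ⟩ := Set.mem_iUnion.1 hv
      exact le_trans (Finset.card_le_card (suppF_subset_of_coordSub hvJ)) hJ
  rw [this]
  exact isClosed_iUnion_of_finite fun J => isClosed_coordSub J.1

/-- descent lemma -/
lemma descent {E : Type*} [NormedAddCommGroup E] [InnerProductSpace ℝ E] [CompleteSpace E]
    (f : E → ℝ) (f' : E → E) (L : ℝ)
    (hgrad : ∀ x, HasGradientAt f (f' x) x)
    (hlip : ∀ x y, ‖f' x - f' y‖ ≤ L * ‖x - y‖) (x y : E) :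
    f y ≤ f x + inner ℝ (f' x) (y - x) + L / 2 * ‖y - x‖ ^ 2 := by
  set v := y - x with hv
  set φ : ℝ → ℝ := fun t => f (x + t • v) - t * inner ℝ (f' x) v - L / 2 * t ^ 2 * ‖v‖ ^ 2 with hφ
  have hline : ∀ t : ℝ, HasDerivAt (fun t : ℝ => x + t • v) v t := fun t => by
    simpa using ((hasDerivAt_id t).smul_const v).const_add x
  have hfd : ∀ t : ℝ, HasDerivAt (fun t => f (x + t • v))
      (inner ℝ (f' (x + t • v)) v : ℝ) t := fun t => by
    have h1 := (hgrad (x + t • v)).hasFDerivAt.comp_hasDerivAt t (hline t)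
    simp [InnerProductSpace.toDual_apply_apply] at h1
    exact h1
  have hφd : ∀ t : ℝ, HasDerivAt φ
      ((inner ℝ (f' (x + t • v)) v : ℝ) - inner ℝ (f' x) v - L * t * ‖v‖ ^ 2) t := fun t => by
    have h2 : HasDerivAt (fun t : ℝ => t * (inner ℝ (f' x) v : ℝ)) (inner ℝ (f' x) v : ℝ) t := by
      simpa using (hasDerivAt_id t).mul_const (inner ℝ (f' x) v : ℝ)
    have h3 : HasDerivAt (fun t : ℝ => L / 2 * t ^ 2 * ‖v‖ ^ 2) (L * t * ‖v‖ ^ 2) t := by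
      have := ((hasDerivAt_pow 2 t).const_mul (L / 2)).mul_const (‖v‖ ^ 2)
      refine this.congr_deriv ?_
      ring
    rw [hφ]
    exact ((hfd t).sub h2).sub h3
  have hderiv_nonpos : ∀ t ∈ Set.Ioo (0:ℝ) 1, deriv φ t ≤ 0 := by
    intro t ht
    rw [(hφd t).deriv]
    have h4 : (inner ℝ (f' (x + t • v)) v : ℝ) - inner ℝ (f' x) v
        = inner ℝ (f' (x + t • v) - f' x) v := by rw [inner_sub_left]
    rw [h4]
    have h5 : (inner ℝ (f' (x + t • v) - f' x) v : ℝ) ≤ ‖f' (x + t • v) - f' x‖ * ‖v‖ :=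
      real_inner_le_norm _ _
    have h6 : ‖f' (x + t • v) - f' x‖ ≤ L * (t * ‖v‖) := by
      have := hlip (x + t • v) x
      simpa [norm_smul, abs_of_pos ht.1] using this
    nlinarith [norm_nonneg v, ht.1.le, mul_le_mul_of_nonneg_right h6 (norm_nonneg v)]
  have hanti : AntitoneOn φ (Set.Icc 0 1) := by
    apply antitoneOn_of_deriv_nonpos (convex_Icc 0 1)
    · exact fun t _ => ((hφd t).continuousAt).continuousWithinAt
    · exact fun t ht => ((hφd t).differentiableAt).differentiableWithinAt
    · intro t ht
      rw [interior_Icc] at ht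
      exact hderiv_nonpos t ht
  have h10 : φ 1 ≤ φ 0 := hanti (by norm_num) (by norm_num) (by norm_num)
  simp only [hφ, one_smul, zero_smul, add_zero, one_pow, one_mul, zero_pow, mul_zero,
    zero_mul, sub_zero] at h10
  have : x + v = y := by rw [hv]; abel
  rw [this] at h10
  linarith

lemma norm_le_of_sq_le_sq {a b : ℝ} (hb : 0 ≤ b) (h : a ^ 2 ≤ b ^ 2) (_ha : 0 ≤ a) : a ≤ b := by
  nlinarith

end Aux


/- STATEMENT 9: R-linear convergence of the objective values of PG under the
singleton-projection and contraction assumptions. -/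
open Aux in
set_option maxHeartbeats 4000000 in
/-- R-linear convergence of the objective values of PG under the
singleton-projection and contraction assumptions. -/
theorem stmt9 {n s : ℕ} (hs1 : 1 ≤ s) (hsn : s ≤ n)
    (f : EuclideanSpace ℝ (Fin n) → ℝ)
    (f' : EuclideanSpace ℝ (Fin n) → EuclideanSpace ℝ (Fin n))
    (L lam : ℝ) (hL : 0 < L)
    (hconv : ConvexOn ℝ Set.univ f)
    (hgrad : ∀ x, HasGradientAt f (f' x) x)
    (hlip : ∀ x y, ‖f' x - f' y‖ ≤ L * ‖x - y‖)
    (hbdd : BddBelow (f '' spSet n s))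
    (hlam0 : 0 < lam) (hlamL : lam < 1 / L)
    (w : ℕ → EuclideanSpace ℝ (Fin n))
    (hw0 : w 0 ∈ spSet n s)
    (hiter : ∀ k, w (k + 1) ∈ projSet (spSet n s) (w k - lam • f' (w k)))
    (wstar : EuclideanSpace ℝ (Fin n))
    (haccum : ∃ φ : ℕ → ℕ, StrictMono φ ∧ Tendsto (fun k => w (φ k)) atTop (𝓝 wstar))
    (hsingleton : ∃ p, projSet (spSet n s) (wstar - lam • f' wstar) = {p})
    (γ : ℝ) (hγ0 : 0 ≤ γ) (hγ1 : γ < 1)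
    (hcontract : ∀ J : Finset (Fin n), J.card = s → wstar ∈ coordSub J →
      ∀ u ∈ coordSub J, ∀ v ∈ coordSub J,
        ‖(u - lam • f' u) - (v - lam • f' v)‖ ≤ γ * ‖u - v‖) :
    ∃ C > 0, ∃ ρ : ℝ, 0 < ρ ∧ ρ < 1 ∧ ∀ k, f (w k) - f wstar ≤ C * ρ ^ k := by
  have hcardn : (s : ℕ) ≤ Fintype.card (Fin n) := by simpa using hsn
  set z : ℕ → EuclideanSpace ℝ (Fin n) := fun k => w k - lam • f' (w k) with hz_def
  set zs : EuclideanSpace ℝ (Fin n) := wstar - lam • f' wstar with hzs_def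
  -- Part 1 : iterates stay sparse, sufficient decrease
  have hwA : ∀ k, w k ∈ spSet n s := by
    intro k
    cases k with
    | zero => exact hw0
    | succ m => exact (hiter m).1
  have hc : 0 < 1 / (2 * lam) - L / 2 := by
    rw [lt_div_iff₀ hL] at hlamL
    rw [sub_pos, div_lt_div_iff₀ (by norm_num) (by positivity)]
    nlinarith
  set c : ℝ := 1 / (2 * lam) - L / 2 with hc_def
  have hdec : ∀ k, f (w (k + 1)) + c * ‖w (k + 1) - w k‖ ^ 2 ≤ f (w k) := by
    intro k
    have h1 : ‖z k - w (k + 1)‖ ≤ ‖z k - w k‖ := (hiter k).2 _ (hwA k)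
    set g := f' (w k) with hg
    set d := w (k + 1) - w k with hd
    have h2 : z k - w (k + 1) = -(d + lam • g) := by
      simp only [hz_def, hd, hg]
      abel
    have h3 : z k - w k = -(lam • g) := by
      simp only [hz_def]
      abel
    rw [h2, h3, norm_neg, norm_neg] at h1
    have h4 : ‖d + lam • g‖ ^ 2 ≤ ‖lam • g‖ ^ 2 :=
      pow_le_pow_left₀ (norm_nonneg _) h1 2
    rw [norm_add_sq_real] at h4
    have h5 : (inner ℝ d (lam • g) : ℝ) = lam * inner ℝ d g := real_inner_smul_right d g lam
    have h6 : (inner ℝ d g : ℝ) ≤ -(1 / (2 * lam)) * ‖d‖ ^ 2 := by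
      rw [h5] at h4
      have hkey : ‖d‖ ^ 2 + 2 * (lam * inner ℝ d g) ≤ 0 := by linarith
      have h2l : (0:ℝ) < 2 * lam := by linarith
      rw [← mul_le_mul_iff_right₀ h2l]
      have heq : 2 * lam * (-(1 / (2 * lam)) * ‖d‖ ^ 2) = -‖d‖ ^ 2 := by
        field_simp
      rw [heq]
      linarith
    have h7 := descent f f' L hgrad hlip (w k) (w (k + 1))
    have h8 : (inner ℝ g (w (k + 1) - w k) : ℝ) = inner ℝ d g := by
      rw [real_inner_comm]
    rw [h8] at h7
    have h9 : ‖w (k + 1) - w k‖ = ‖d‖ := rfl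
    rw [h9, hc_def]
    rw [h9] at h7
    linarith [h6, h7]
  have hanti : Antitone fun k => f (w k) := by
    apply antitone_nat_of_succ_le
    intro k
    have := hdec k
    nlinarith [sq_nonneg ‖w (k + 1) - w k‖, hc]
  -- convergence of f values and vanishing steps
  have hrange : Set.range (fun k => f (w k)) ⊆ f '' spSet n s := by
    rintro x ⟨k, rfl⟩
    exact ⟨w k, hwA k, rfl⟩
  have hbddb : BddBelow (Set.range fun k => f (w k)) := hbdd.mono hrange
  have hconvf : Tendsto (fun k => f (w k)) atTop (𝓝 (⨅ k, f (w k))) :=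
    tendsto_atTop_ciInf hanti hbddb
  have hshift : Tendsto (fun k => f (w (k + 1))) atTop (𝓝 (⨅ k, f (w k))) :=
    hconvf.comp (tendsto_add_atTop_nat 1)
  have hdiff0 : Tendsto (fun k => f (w k) - f (w (k + 1))) atTop (𝓝 0) := by
    have := hconvf.sub hshift
    simpa using this
  have hd2 : Tendsto (fun k => ‖w (k + 1) - w k‖ ^ 2) atTop (𝓝 0) := by
    apply squeeze_zero (fun k => sq_nonneg _) (g := fun k => (f (w k) - f (w (k + 1))) / c)
    · intro k
      have := hdec k
      rw [le_div_iff₀ hc]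
      nlinarith
    · simpa using hdiff0.div_const c
  have hdnorm : Tendsto (fun k => ‖w (k + 1) - w k‖) atTop (𝓝 0) := by
    have h1 : Tendsto (fun k => Real.sqrt (‖w (k + 1) - w k‖ ^ 2)) atTop (𝓝 (Real.sqrt 0)) :=
      (Real.continuous_sqrt.tendsto 0).comp hd2
    simpa [Real.sqrt_sq (norm_nonneg _)] using h1
  -- Part 2 : wstar is a projection point of zs
  obtain ⟨φ, hφmono, hφtend⟩ := haccum
  have hφat : Tendsto φ atTop atTop := hφmono.tendsto_atTop
  have h1' : Tendsto (fun k => w (φ k + 1)) atTop (𝓝 wstar) := by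
    have hdsub : Tendsto (fun k => w (φ k + 1) - w (φ k)) atTop (𝓝 0) := by
      rw [tendsto_zero_iff_norm_tendsto_zero]
      exact hdnorm.comp hφat
    have := hdsub.add hφtend
    simpa using this
  have hf'cont : Continuous f' := by
    have hl : LipschitzWith (Real.toNNReal L) f' := by
      apply LipschitzWith.of_dist_le_mul
      intro x y
      rw [dist_eq_norm, dist_eq_norm, Real.coe_toNNReal L hL.le]
      exact hlip x y
    exact hl.continuous
  have hztend : Tendsto (fun k => z (φ k)) atTop (𝓝 zs) := by
    have h2' : Tendsto (fun k => f' (w (φ k))) atTop (𝓝 (f' wstar)) :=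
      (hf'cont.tendsto wstar).comp hφtend
    exact hφtend.sub (h2'.const_smul lam)
  have hwstarA : wstar ∈ spSet n s :=
    isClosed_spSet.mem_of_tendsto hφtend (Filter.Eventually.of_forall fun k => hwA _)
  have hwstarP : wstar ∈ projSet (spSet n s) zs := by
    refine ⟨hwstarA, fun x hx => ?_⟩
    have ht1 : Tendsto (fun k => ‖z (φ k) - w (φ k + 1)‖) atTop (𝓝 ‖zs - wstar‖) :=
      (hztend.sub h1').norm
    have ht2 : Tendsto (fun k => ‖z (φ k) - x‖) atTop (𝓝 ‖zs - x‖) :=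
      (hztend.sub tendsto_const_nhds).norm
    exact le_of_tendsto_of_tendsto' ht1 ht2 fun k => (hiter (φ k)).2 x hx
  obtain ⟨p, hp⟩ := hsingleton
  have huniq : ∀ y, y ∈ projSet (spSet n s) zs → y = wstar := by
    have hwp : wstar = p := by
      have := hwstarP
      rw [hp] at this
      exact this
    intro y hy
    rw [hp] at hy
    rw [hy, ← hwp]
  -- Part 3 : structure of wstar, gap property
  set S : Finset (Fin n) := suppF wstar with hS_def
  have hScard : S.card ≤ s := hwstarA
  obtain ⟨Jstar, hSJstar, hJstarcard⟩ := Finset.exists_superset_card_eq hScard hcardn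
  have hwstar_eq : wstar = coordRestrict Jstar zs :=
    proj_eq_restrict hwstarP hSJstar (le_of_eq hJstarcard)
  have hzS : ∀ i ∈ S, zs i = wstar i := by
    intro i hi
    conv_rhs => rw [hwstar_eq]
    rw [cr_apply, if_pos (hSJstar hi)]
  have hSne : ∀ i ∈ S, wstar i ≠ 0 := fun i hi => mem_suppF.1 hi
  -- the gap property
  have hgap : ∀ i ∈ S, ∀ j ∉ S, |zs j| < |zs i| := by
    intro i hi j hj
    by_contra hcon
    push_neg at hcon
    have hzi : zs i ≠ 0 := by
      rw [hzS i hi]; exact hSne i hi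
    have hjJstar : j ∉ Jstar := by
      intro hjJ
      have h1 : wstar j = zs j := by
        conv_lhs => rw [hwstar_eq]
        rw [cr_apply, if_pos hjJ]
      have h2 : wstar j = 0 := by
        by_contra h3
        exact hj (mem_suppF.2 h3)
      have h4 : zs j = 0 := by rw [← h1, h2]
      rw [h4] at hcon
      simp only [abs_zero] at hcon
      exact hzi (abs_eq_zero.1 (le_antisymm hcon (abs_nonneg _)))
    have hiJstar : i ∈ Jstar := hSJstar hi
    set J' : Finset (Fin n) := insert j (Jstar.erase i) with hJ'_def
    have hJ'card : J'.card = s := by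
      rw [hJ'_def, Finset.card_insert_of_notMem (fun h => hjJstar (Finset.mem_of_mem_erase h)),
        Finset.card_erase_of_mem hiJstar, hJstarcard]
      omega
    have hsum : ∑ k ∈ J'ᶜ, (zs k) ^ 2 = ∑ k ∈ Jstarᶜ, (zs k) ^ 2 + (zs i) ^ 2 - (zs j) ^ 2 :=
      sum_compl_swap hjJstar hiJstar (fun k => (zs k) ^ 2)
    have hle : (zs i) ^ 2 ≤ (zs j) ^ 2 := by
      rw [← sq_abs, ← sq_abs (zs j)]
      exact pow_le_pow_left₀ (abs_nonneg _) hcon 2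
    have hproj' : coordRestrict J' zs ∈ projSet (spSet n s) zs := by
      refine ⟨cr_mem_spSet (le_of_eq hJ'card) zs, fun x hx => ?_⟩
      have hA : ‖zs - coordRestrict J' zs‖ ^ 2 ≤ ‖zs - wstar‖ ^ 2 := by
        rw [dist_sq_cr, hwstar_eq, dist_sq_cr]
        linarith
      have hB : ‖zs - coordRestrict J' zs‖ ≤ ‖zs - wstar‖ :=
        norm_le_of_sq_le_sq (norm_nonneg _) hA (norm_nonneg _)
      exact hB.trans (hwstarP.2 x hx)
    have heq := huniq _ hproj'
    have hzero : coordRestrict J' zs i = 0 := by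
      rw [cr_apply, if_neg]
      rw [hJ'_def]
      simp only [Finset.mem_insert, Finset.mem_erase]
      push_neg
      exact ⟨fun h => hjJstar (h ▸ hiJstar), fun h => absurd rfl h⟩
    rw [heq] at hzero
    exact hSne i hi hzero
  -- Part 4 : open neighborhoods
  have hcoordcont : ∀ i : Fin n, Continuous fun v : EuclideanSpace ℝ (Fin n) => v i :=
    fun i => (EuclideanSpace.proj i).continuous
  have hUopen : ∃ δ > (0:ℝ), ∀ z' : EuclideanSpace ℝ (Fin n), ‖z' - zs‖ < δ →
      ∀ i ∈ S, 0 < |z' i| ∧ ∀ j ∉ S, |z' j| < |z' i| := by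
    set U : Set (EuclideanSpace ℝ (Fin n)) :=
      {z' | ∀ i ∈ S, 0 < |z' i| ∧ ∀ j ∉ S, |z' j| < |z' i|} with hU_def
    have hUopen : IsOpen U := by
      have hU_eq : U = ⋂ i ∈ S, ({z' : EuclideanSpace ℝ (Fin n) | 0 < |z' i|} ∩
          ⋂ j ∈ Sᶜ, {z' : EuclideanSpace ℝ (Fin n) | |z' j| < |z' i|}) := by
        ext v
        simp [hU_def, Finset.mem_compl]
      rw [hU_eq]
      apply isOpen_biInter_finset
      intro i _
      apply IsOpen.inter
      · exact isOpen_lt continuous_const ((hcoordcont i).abs)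
      · exact isOpen_biInter_finset fun j _ => isOpen_lt ((hcoordcont j).abs) ((hcoordcont i).abs)
    have hzsU : zs ∈ U := by
      intro i hi
      constructor
      · rw [abs_pos, hzS i hi]
        exact hSne i hi
      · exact fun j hj => hgap i hi j hj
    obtain ⟨δ, hδ0, hball⟩ := Metric.isOpen_iff.1 hUopen zs hzsU
    refine ⟨δ, hδ0, fun z' hz' => ?_⟩
    apply hball
    rw [Metric.mem_ball, dist_eq_norm]
    exact hz'
  obtain ⟨δ, hδ0, hUnear⟩ := hUopen
  have hVopen : ∃ δ₀ > (0:ℝ), ∀ v : EuclideanSpace ℝ (Fin n), ‖v - wstar‖ < δ₀ →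
      ∀ i ∈ S, v i ≠ 0 := by
    set V : Set (EuclideanSpace ℝ (Fin n)) := {v | ∀ i ∈ S, v i ≠ 0} with hV_def
    have hVopen : IsOpen V := by
      have hV_eq : V = ⋂ i ∈ S, {v : EuclideanSpace ℝ (Fin n) | v i ≠ 0} := by
        ext v; simp [hV_def]
      rw [hV_eq]
      exact isOpen_biInter_finset fun i _ => isOpen_ne_fun (hcoordcont i) continuous_const
    obtain ⟨δ₀, hδ₀, hball⟩ := Metric.isOpen_iff.1 hVopen wstar hSne
    refine ⟨δ₀, hδ₀, fun v hv => ?_⟩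
    apply hball
    rw [Metric.mem_ball, dist_eq_norm]
    exact hv
  obtain ⟨δ₀, hδ₀0, hVnear⟩ := hVopen
  -- Part 5 : support capture near zs
  have hcapture : ∀ z' : EuclideanSpace ℝ (Fin n), ‖z' - zs‖ < δ →
      ∀ y ∈ projSet (spSet n s) z', S ⊆ suppF y := by
    intro z' hz' y hy i hiS
    by_contra hiy
    obtain ⟨hzi_pos, hzi_gap⟩ := hUnear z' hz' i hiS
    have hycard : (suppF y).card ≤ s := hy.1
    obtain ⟨Jy, hyJy, hJycard⟩ := Finset.exists_superset_card_eq hycard hcardn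
    have hy_eq : y = coordRestrict Jy z' := proj_eq_restrict hy hyJy (le_of_eq hJycard)
    have hiJy : i ∉ Jy := by
      intro hiJ
      apply hiy
      rw [mem_suppF, hy_eq, cr_apply, if_pos hiJ]
      intro h
      rw [h] at hzi_pos
      simp at hzi_pos
    obtain ⟨j, hjJy, hjS⟩ : ∃ j ∈ Jy, j ∉ S := by
      by_contra hcon
      push_neg at hcon
      have hsub : insert i Jy ⊆ S := by
        intro x hx
        rcases Finset.mem_insert.1 hx with h | h
        · exact h ▸ hiS
        · exact hcon x h
      have := Finset.card_le_card hsub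
      rw [Finset.card_insert_of_notMem hiJy, hJycard] at this
      omega
    set J' : Finset (Fin n) := insert i (Jy.erase j) with hJ'_def
    have hJ'card : J'.card = s := by
      rw [hJ'_def, Finset.card_insert_of_notMem (fun h => hiJy (Finset.mem_of_mem_erase h)),
        Finset.card_erase_of_mem hjJy, hJycard]
      omega
    have hsum : ∑ k ∈ J'ᶜ, (z' k) ^ 2 = ∑ k ∈ Jyᶜ, (z' k) ^ 2 + (z' j) ^ 2 - (z' i) ^ 2 :=
      sum_compl_swap hiJy hjJy (fun k => (z' k) ^ 2)
    have hlt : (z' j) ^ 2 < (z' i) ^ 2 := by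
      rw [← sq_abs, ← sq_abs (z' i)]
      have := hzi_gap j hjS
      nlinarith [abs_nonneg (z' j)]
    have hopt := hy.2 _ (cr_mem_spSet (le_of_eq hJ'card) z')
    have hA : ‖z' - y‖ ^ 2 = ∑ k ∈ Jyᶜ, (z' k) ^ 2 := by
      rw [hy_eq, dist_sq_cr]
    have hB : ‖z' - coordRestrict J' z'‖ ^ 2 = ∑ k ∈ J'ᶜ, (z' k) ^ 2 := dist_sq_cr J' z'
    nlinarith [norm_nonneg (z' - y), norm_nonneg (z' - coordRestrict J' z')]
  -- Part 6 : fixed-point property of supersets of S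
  have hfix : ∀ J : Finset (Fin n), J.card = s → S ⊆ J → coordRestrict J zs = wstar := by
    intro J hJcard hSJ
    apply huniq
    refine ⟨cr_mem_spSet (le_of_eq hJcard) zs, fun x hx => ?_⟩
    have hvanish : ∑ k ∈ Sᶜ, (zs k) ^ 2 = ∑ k ∈ Jstarᶜ, (zs k) ^ 2 := by
      symm
      apply Finset.sum_subset
      · intro k hk
        rw [Finset.mem_compl] at hk ⊢
        exact fun hkS => hk (hSJstar hkS)
      · intro k hkS hkJ
        rw [Finset.mem_compl] at hkS hkJ
        push_neg at hkJ
        have h1 : wstar k = zs k := by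
          conv_lhs => rw [hwstar_eq]
          rw [cr_apply, if_pos hkJ]
        have h2 : wstar k = 0 := by
          by_contra h3
          exact hkS (mem_suppF.2 h3)
        rw [← h1, h2]
        norm_num
    have hle : ∑ k ∈ Jᶜ, (zs k) ^ 2 ≤ ∑ k ∈ Sᶜ, (zs k) ^ 2 := by
      apply Finset.sum_le_sum_of_subset_of_nonneg
      · intro k hk
        rw [Finset.mem_compl] at hk ⊢
        exact fun hkS => hk (hSJ hkS)
      · exact fun k _ _ => sq_nonneg _
    have hA : ‖zs - coordRestrict J zs‖ ^ 2 ≤ ‖zs - wstar‖ ^ 2 := by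
      rw [dist_sq_cr]
      conv_rhs => rw [hwstar_eq, dist_sq_cr]
      rw [← hvanish] at *
      linarith
    have hB : ‖zs - coordRestrict J zs‖ ≤ ‖zs - wstar‖ :=
      norm_le_of_sq_le_sq (norm_nonneg _) hA (norm_nonneg _)
    exact hB.trans (hwstarP.2 x hx)
  -- Part 7 : contraction of the iterates near wstar
  set ε : ℝ := min δ δ₀ with hε_def
  have hε0 : 0 < ε := lt_min hδ0 hδ₀0
  obtain ⟨K, hK⟩ : ∃ K, ‖w (φ K) - wstar‖ < ε := by
    have := Metric.tendsto_atTop.1 hφtend ε hε0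
    obtain ⟨K, hK⟩ := this
    exact ⟨K, by rw [← dist_eq_norm]; exact hK K le_rfl⟩
  set k₀ : ℕ := φ K with hk₀_def
  have hkey : ∀ k, ‖w k - wstar‖ < ε → ‖w (k + 1) - wstar‖ ≤ γ * ‖w k - wstar‖ := by
    intro k hk
    -- S inside the support of w k
    have hSsupp : S ⊆ suppF (w k) := by
      intro i hi
      rw [mem_suppF]
      exact hVnear (w k) (lt_of_lt_of_le hk (min_le_right _ _)) i hi
    obtain ⟨Jk, hJk1, hJk2⟩ := Finset.exists_superset_card_eq (hwA k) hcardn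
    have hwkJk : w k ∈ coordSub Jk := mem_coordSub_of_suppF hJk1
    have hwsJk : wstar ∈ coordSub Jk :=
      mem_coordSub_of_suppF (Finset.Subset.trans hSsupp hJk1)
    have hcz : ‖z k - zs‖ ≤ γ * ‖w k - wstar‖ :=
      hcontract Jk hJk2 hwsJk (w k) hwkJk wstar hwsJk
    have hznear : ‖z k - zs‖ < δ := by
      calc ‖z k - zs‖ ≤ γ * ‖w k - wstar‖ := hcz
        _ ≤ 1 * ‖w k - wstar‖ := by
            apply mul_le_mul_of_nonneg_right hγ1.le (norm_nonneg _)
        _ = ‖w k - wstar‖ := one_mul _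
        _ < ε := hk
        _ ≤ δ := min_le_left _ _
    have hproj := hiter k
    have hScap : S ⊆ suppF (w (k + 1)) := hcapture (z k) hznear _ hproj
    obtain ⟨J', hJ'1, hJ'2⟩ := Finset.exists_superset_card_eq (hwA (k + 1)) hcardn
    have hy_eq : w (k + 1) = coordRestrict J' (z k) :=
      proj_eq_restrict hproj hJ'1 (le_of_eq hJ'2)
    have hws_eq : wstar = coordRestrict J' zs :=
      (hfix J' hJ'2 (Finset.Subset.trans hScap hJ'1)).symm
    calc ‖w (k + 1) - wstar‖ = ‖coordRestrict J' (z k - zs)‖ := by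
          rw [hy_eq]
          conv_lhs => rw [hws_eq]
          rw [← cr_sub]
      _ ≤ ‖z k - zs‖ := norm_cr_le J' (z k - zs)
      _ ≤ γ * ‖w k - wstar‖ := hcz
  set R : ℝ := ‖w k₀ - wstar‖ with hR_def
  have hbound : ∀ m : ℕ, ‖w (k₀ + m) - wstar‖ ≤ γ ^ m * R ∧ ‖w (k₀ + m) - wstar‖ < ε := by
    intro m
    induction m with
    | zero => exact ⟨by simp [hR_def], by simpa using hK⟩
    | succ m ih =>
        have hstep := hkey (k₀ + m) ih.2
        have h1 : ‖w (k₀ + (m + 1)) - wstar‖ ≤ γ * ‖w (k₀ + m) - wstar‖ := by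
          have : k₀ + (m + 1) = (k₀ + m) + 1 := by omega
          rw [this]
          exact hstep
        constructor
        · calc ‖w (k₀ + (m + 1)) - wstar‖ ≤ γ * ‖w (k₀ + m) - wstar‖ := h1
            _ ≤ γ * (γ ^ m * R) := mul_le_mul_of_nonneg_left ih.1 hγ0
            _ = γ ^ (m + 1) * R := by ring
        · calc ‖w (k₀ + (m + 1)) - wstar‖ ≤ γ * ‖w (k₀ + m) - wstar‖ := h1
            _ ≤ 1 * ‖w (k₀ + m) - wstar‖ :=
                mul_le_mul_of_nonneg_right hγ1.le (norm_nonneg _)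
            _ = ‖w (k₀ + m) - wstar‖ := one_mul _
            _ < ε := ih.2
  -- Part 8 : assembling the rate
  set B : ℝ := ‖f' wstar‖ + L / 2 * ε with hB_def
  have hB0 : 0 ≤ B := by
    have : (0:ℝ) ≤ L / 2 * ε := by positivity
    have := norm_nonneg (f' wstar)
    rw [hB_def]; linarith
  have hR0 : 0 ≤ R := norm_nonneg _
  have hub : ∀ m : ℕ, f (w (k₀ + m)) - f wstar ≤ B * (γ ^ m * R) := by
    intro m
    have h7 := descent f f' L hgrad hlip wstar (w (k₀ + m))
    have h8 : (inner ℝ (f' wstar) (w (k₀ + m) - wstar) : ℝ) ≤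
        ‖f' wstar‖ * ‖w (k₀ + m) - wstar‖ := real_inner_le_norm _ _
    obtain ⟨hb1, hb2⟩ := hbound m
    have hnn : 0 ≤ ‖w (k₀ + m) - wstar‖ := norm_nonneg _
    have h9 : L / 2 * ‖w (k₀ + m) - wstar‖ ^ 2 ≤ L / 2 * ε * ‖w (k₀ + m) - wstar‖ := by
      nlinarith [mul_le_mul_of_nonneg_right hb2.le hnn, hL.le, hnn]
    have h10 : f (w (k₀ + m)) - f wstar ≤ B * ‖w (k₀ + m) - wstar‖ := by
      rw [hB_def]
      nlinarith
    calc f (w (k₀ + m)) - f wstar ≤ B * ‖w (k₀ + m) - wstar‖ := h10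
      _ ≤ B * (γ ^ m * R) := mul_le_mul_of_nonneg_left hb1 hB0
  set ρ : ℝ := max γ 2⁻¹ with hρ_def
  have hρ0 : 0 < ρ := lt_of_lt_of_le (by norm_num) (le_max_right _ _)
  have hρ1 : ρ < 1 := max_lt hγ1 (by norm_num)
  have hγρ : γ ≤ ρ := le_max_left _ _
  set C : ℝ := (max (f (w 0) - f wstar) 0 + B * R + 1) / ρ ^ k₀ with hC_def
  have hρk0 : (0:ℝ) < ρ ^ k₀ := pow_pos hρ0 k₀
  have hBR : 0 ≤ B * R := mul_nonneg hB0 hR0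
  have hC0 : 0 < C := by
    rw [hC_def]
    apply div_pos _ hρk0
    have := le_max_right (f (w 0) - f wstar) 0
    linarith
  refine ⟨C, hC0, ρ, hρ0, hρ1, fun k => ?_⟩
  rcases le_or_gt k₀ k with hkk | hkk
  · obtain ⟨m, rfl⟩ : ∃ m, k = k₀ + m := ⟨k - k₀, by omega⟩
    have h1 := hub m
    have h2 : γ ^ m ≤ ρ ^ m := pow_le_pow_left₀ hγ0 hγρ m
    have h3 : B * (γ ^ m * R) ≤ B * R * ρ ^ m := by
      nlinarith [pow_nonneg hγ0 m]
    have h4 : B * R * ρ ^ m ≤ C * ρ ^ (k₀ + m) := by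
      rw [hC_def, pow_add, div_mul_eq_mul_div, le_div_iff₀ hρk0]
      have hmax : (0:ℝ) ≤ max (f (w 0) - f wstar) 0 := le_max_right _ _
      nlinarith [mul_pos (pow_pos hρ0 k₀) (pow_pos hρ0 m)]
    linarith
  · have h1 : f (w k) ≤ f (w 0) := hanti (Nat.zero_le k)
    have h2 : f (w k) - f wstar ≤ max (f (w 0) - f wstar) 0 := by
      have := le_max_left (f (w 0) - f wstar) 0
      linarith
    have h3 : ρ ^ k₀ ≤ ρ ^ k := pow_le_pow_of_le_one hρ0.le hρ1.le (le_of_lt hkk)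
    have h4 : max (f (w 0) - f wstar) 0 ≤ C * ρ ^ k₀ := by
      rw [hC_def, div_mul_eq_mul_div]
      rw [le_div_iff₀ hρk0]
      have hmax : (0:ℝ) ≤ max (f (w 0) - f wstar) 0 := le_max_right _ _
      nlinarith [hρk0]
    calc f (w k) - f wstar ≤ max (f (w 0) - f wstar) 0 := h2
      _ ≤ C * ρ ^ k₀ := h4
      _ ≤ C * ρ ^ k := mul_le_mul_of_nonneg_left h3 hC0.le
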